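/- Let r,s,t be nonnegative integers and α a positive real number with α^(t²) = α^(r²) + α^(s²). Define T : ℤ³ → ℝ by T(i,j,k) = α^(m(m−1)/2) where m = r·i + s·j + t·k (note m(m−1)/2 is always an integer). Then T satisfies the octahedron relation T(i,j,k+1)·T(i,j,k−1) = T(i+1,j,k)·T(i−1,j,k) + T(i,j+1,k)·T(i,j−1,k) at every (i,j,k) ∈ ℤ³; moreover, for every (i,j,k), T(i+1,j,k)·T(i−1,j,k)/(T(i,j,k+1)·T(i,j,k−1)) = α^(r²−t²) and T(i,j+1,k)·T(i,j−1,k)/(T(i,j,k+1)·T(i,j,k−1)) = α^(s²−t²). -/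
import Mathlib

lemma key_div (m u : ℤ) :
    (m + u) * (m + u - 1) / 2 + (m - u) * (m - u - 1) / 2 = m * (m - 1) / 2 + m * (m - 1) / 2 + u ^ 2 := by
  have h1 : 2 ∣ (m + u) * (m + u - 1) := (Int.even_mul_pred_self (m + u)).two_dvd
  have h2 : 2 ∣ (m - u) * (m - u - 1) := (Int.even_mul_pred_self (m - u)).two_dvd
  have h3 : 2 ∣ m * (m - 1) := (Int.even_mul_pred_self m).two_dvd
  have e : (m + u) * (m + u - 1) + (m - u) * (m - u - 1) = m * (m - 1) + m * (m - 1) + 2 * u ^ 2 := by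
    ring
  omega

/-- The uniform solution `T(i,j,k) = α^(m(m−1)/2)`, `m = r·i+s·j+t·k`,
with `α^(t²) = α^(r²) + α^(s²)`, satisfies the octahedron relation, and the coefficients
`L` and `R` are the constants `α^(r²−t²)` and `α^(s²−t²)`. -/
theorem uniform_solution_satisfies_Tsystem
    (r s t : ℤ) (hr : 0 ≤ r) (hs : 0 ≤ s) (ht : 0 ≤ t)
    (α : ℝ) (hα : 0 < α)
    (hαeq : α ^ (t ^ 2) = α ^ (r ^ 2) + α ^ (s ^ 2))
    (T : ℤ → ℤ → ℤ → ℝ)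
    (hT : ∀ i j k : ℤ,
      T i j k = α ^ ((r * i + s * j + t * k) * (r * i + s * j + t * k - 1) / 2)) :
    ∀ i j k : ℤ,
      (T i j (k + 1) * T i j (k - 1)
        = T (i + 1) j k * T (i - 1) j k + T i (j + 1) k * T i (j - 1) k) ∧
      T (i + 1) j k * T (i - 1) j k / (T i j (k + 1) * T i j (k - 1)) = α ^ (r ^ 2 - t ^ 2) ∧
      T i (j + 1) k * T i (j - 1) k / (T i j (k + 1) * T i j (k - 1)) = α ^ (s ^ 2 - t ^ 2) := by
  intro i j k
  have hne : α ≠ 0 := hα.ne'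
  set m : ℤ := r * i + s * j + t * k with hm
  have prod : ∀ u : ℤ, α ^ ((m + u) * (m + u - 1) / 2) * α ^ ((m - u) * (m - u - 1) / 2)
      = α ^ (m * (m - 1) / 2 + m * (m - 1) / 2) * α ^ (u ^ 2) := by
    intro u
    rw [← zpow_add₀ hne, ← zpow_add₀ hne, key_div]
  have eT : T i j (k + 1) * T i j (k - 1)
      = α ^ (m * (m - 1) / 2 + m * (m - 1) / 2) * α ^ (t ^ 2) := by
    rw [hT, hT]
    have e1 : r * i + s * j + t * (k + 1) = m + t := by ring
    have e2 : r * i + s * j + t * (k - 1) = m - t := by ring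
    rw [e1, e2, prod]
  have eR : T (i + 1) j k * T (i - 1) j k
      = α ^ (m * (m - 1) / 2 + m * (m - 1) / 2) * α ^ (r ^ 2) := by
    rw [hT, hT]
    have e1 : r * (i + 1) + s * j + t * k = m + r := by ring
    have e2 : r * (i - 1) + s * j + t * k = m - r := by ring
    rw [e1, e2, prod]
  have eS : T i (j + 1) k * T i (j - 1) k
      = α ^ (m * (m - 1) / 2 + m * (m - 1) / 2) * α ^ (s ^ 2) := by
    rw [hT, hT]
    have e1 : r * i + s * (j + 1) + t * k = m + s := by ring
    have e2 : r * i + s * (j - 1) + t * k = m - s := by ring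
    rw [e1, e2, prod]
  have hz : (α : ℝ) ^ (m * (m - 1) / 2 + m * (m - 1) / 2) ≠ 0 := zpow_ne_zero _ hne
  refine ⟨?_, ?_, ?_⟩
  · rw [eT, eR, eS, hαeq]; ring
  · rw [eR, eT, mul_div_mul_left _ _ hz, ← zpow_sub₀ hne]
  · rw [eS, eT, mul_div_mul_left _ _ hz, ← zpow_sub₀ hne]
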